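/- Let M₁, …, M_Q ∈ Matrix (Fin n) (Fin n) ℂ and for a parameter define real coefficients θ(P) = (θ₁,…,θ_Q) ∈ ℝ^Q with M(P) = Σ_j θ_j M_j; write J(θ, y) = Σ_{1 ≤ j ≤ m ≤ Q} (2 − δ_{j,m}) θ_j θ_m y_{j,m} for y ∈ ℝ^{Q(Q+1)/2}. For any nonzero v ∈ ℂⁿ, the vector y(v) with entries y_{j,m}(v) = (v* ((M_j* M_m)^H) v)/(v* v) satisfies: (i) λ_min((M_j* M_m)^H) ≤ y_{j,m}(v) ≤ λ_max((M_j* M_m)^H) for all j ≤ m; and (ii) J(θ', y(v)) ≥ σ_min(Σ_j θ'_j M_j)² for every θ' ∈ ℝ^Q. Consequently, if v* is a nonzero vector achieving σ_min(M(P))² = (v*ᵀ̄ M(P)* M(P) v*)/(v*ᵀ̄ v*), then the infimum of J(θ(P), y) over all y satisfying the box constraints (i) and finitely many constraints J(θ(P_ℓ), y) ≥ σ_min(M(P_ℓ))² is at most σ_min(M(P))². -/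

import Mathlib

open Matrix

/-- Euclidean (ℓ²) norm of a complex vector. -/
noncomputable def vecNorm {n : ℕ} (v : Fin n → ℂ) : ℝ :=
  Real.sqrt (∑ i, ‖v i‖ ^ 2)

/-- Smallest singular value of a square complex matrix. -/
noncomputable def sigmaMin {n : ℕ} (M : Matrix (Fin n) (Fin n) ℂ) : ℝ :=
  ⨅ v : {v : Fin n → ℂ // vecNorm v = 1}, vecNorm (M.mulVec v.1)

/-- Hermitian part `N^H = (N + N*)/2` of a square complex matrix. -/
noncomputable def hermPart {n : ℕ} (N : Matrix (Fin n) (Fin n) ℂ) :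
    Matrix (Fin n) (Fin n) ℂ :=
  (2⁻¹ : ℂ) • (N + Nᴴ)

/-- Rayleigh quotient of a square complex matrix (real part). -/
noncomputable def rayleigh {n : ℕ} (N : Matrix (Fin n) (Fin n) ℂ) (v : Fin n → ℂ) : ℝ :=
  (star v ⬝ᵥ N.mulVec v).re / ∑ i, ‖v i‖ ^ 2

/-- Smallest (real) eigenvalue of a Hermitian matrix, via the Rayleigh quotient. -/
noncomputable def lamMin {n : ℕ} (N : Matrix (Fin n) (Fin n) ℂ) : ℝ :=
  ⨅ v : {v : Fin n → ℂ // v ≠ 0}, rayleigh N v.1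

/-- Largest (real) eigenvalue of a Hermitian matrix, via the Rayleigh quotient. -/
noncomputable def lamMax {n : ℕ} (N : Matrix (Fin n) (Fin n) ℂ) : ℝ :=
  ⨆ v : {v : Fin n → ℂ // v ≠ 0}, rayleigh N v.1

/-- The SCM objective `J(θ, y) = Σ_{j ≤ m} (2 - δ_{j,m}) θ_j θ_m y_{j,m}`. -/
noncomputable def scmJ {Q : ℕ} (θ : Fin Q → ℝ) (y : Fin Q → Fin Q → ℝ) : ℝ :=
  ∑ j : Fin Q, ∑ m ∈ Finset.Ici j, (if j = m then 1 else 2 : ℝ) * θ j * θ m * y j m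

/-- The exact Rayleigh-quotient vector `y(v)` with entries
`y_{j,m}(v) = v* (M_j* M_m)^H v / (v* v)`. -/
noncomputable def scmY {n Q : ℕ} (M : Fin Q → Matrix (Fin n) (Fin n) ℂ) (v : Fin n → ℂ) :
    Fin Q → Fin Q → ℝ :=
  fun j m => rayleigh (hermPart ((M j)ᴴ * M m)) v

/-! ### Auxiliary lemmas -/

lemma dot_self_re {n : ℕ} (w : Fin n → ℂ) : (star w ⬝ᵥ w).re = ∑ i, ‖w i‖ ^ 2 := by
  simp only [dotProduct, Complex.re_sum]
  refine Finset.sum_congr rfl fun i _ => ?_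
  rw [Pi.star_apply, Complex.star_def, mul_comm, Complex.mul_conj]
  simp [Complex.normSq_eq_norm_sq, ← Complex.ofReal_pow]

lemma quad_conjT {n : ℕ} (N : Matrix (Fin n) (Fin n) ℂ) (v : Fin n → ℂ) :
    star v ⬝ᵥ Nᴴ *ᵥ v = star (star v ⬝ᵥ N *ᵥ v) := by
  rw [star_dotProduct, star_mulVec, conjTranspose_conjTranspose, ← dotProduct_mulVec]

lemma quad_hermPart {n : ℕ} (N : Matrix (Fin n) (Fin n) ℂ) (v : Fin n → ℂ) :
    (star v ⬝ᵥ (hermPart N) *ᵥ v) = ((star v ⬝ᵥ N *ᵥ v).re : ℂ) := by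
  rw [hermPart, smul_mulVec, add_mulVec, dotProduct_smul, dotProduct_add, quad_conjT]
  rw [Complex.star_def, Complex.add_conj]
  simp

lemma rayleigh_hermPart {n : ℕ} (N : Matrix (Fin n) (Fin n) ℂ) (v : Fin n → ℂ) :
    rayleigh (hermPart N) v = rayleigh N v := by
  unfold rayleigh
  rw [show ((star v ⬝ᵥ (hermPart N) *ᵥ v)) = ((star v ⬝ᵥ N *ᵥ v).re : ℂ) from quad_hermPart N v]
  simp

lemma quad_gram {n : ℕ} (N : Matrix (Fin n) (Fin n) ℂ) (v : Fin n → ℂ) :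
    star v ⬝ᵥ (Nᴴ * N) *ᵥ v = star (N *ᵥ v) ⬝ᵥ (N *ᵥ v) := by
  rw [← mulVec_mulVec, dotProduct_mulVec, ← star_mulVec]

lemma rayleigh_smul {n : ℕ} (N : Matrix (Fin n) (Fin n) ℂ) (v : Fin n → ℂ) (c : ℂ)
    (hc : c ≠ 0) : rayleigh N (c • v) = rayleigh N v := by
  unfold rayleigh
  have h1 : star (c • v) ⬝ᵥ N *ᵥ (c • v) = (‖c‖ ^ 2 : ℝ) * (star v ⬝ᵥ N *ᵥ v) := by
    rw [star_smul, mulVec_smul, dotProduct_smul, smul_dotProduct]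
    rw [smul_eq_mul, smul_eq_mul, ← mul_assoc, Complex.star_def,
      Complex.mul_conj, Complex.normSq_eq_norm_sq]
  have h2 : ∑ i, ‖(c • v) i‖ ^ 2 = ‖c‖ ^ 2 * ∑ i, ‖v i‖ ^ 2 := by
    rw [Finset.mul_sum]
    refine Finset.sum_congr rfl fun i _ => ?_
    simp [norm_smul, mul_pow]
  rw [h1, h2, Complex.re_ofReal_mul]
  exact mul_div_mul_left _ _ (by have := norm_pos_iff.2 hc; positivity)

lemma sum_sq_pos {n : ℕ} {v : Fin n → ℂ} (hv : v ≠ 0) : 0 < ∑ i, ‖v i‖ ^ 2 := by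
  rcases Function.ne_iff.1 hv with ⟨i, hi⟩
  exact Finset.sum_pos' (fun _ _ => by positivity)
    ⟨i, Finset.mem_univ i, by simpa using pow_pos (norm_pos_iff.2 hi) 2⟩

lemma quad_entries {n : ℕ} (N : Matrix (Fin n) (Fin n) ℂ) (v : Fin n → ℂ) :
    star v ⬝ᵥ N *ᵥ v = ∑ i, ∑ j, star (v i) * (N i j * v j) := by
  simp [dotProduct, mulVec, Finset.mul_sum]

lemma quad_abs_bound {n : ℕ} (N : Matrix (Fin n) (Fin n) ℂ) (v : Fin n → ℂ) :
    |(star v ⬝ᵥ N *ᵥ v).re| ≤ (∑ i, ∑ j, ‖N i j‖) * ∑ i, ‖v i‖ ^ 2 := by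
  set S := ∑ i, ‖v i‖ ^ 2 with hS
  have hvS : ∀ i j, ‖v i‖ * ‖v j‖ ≤ S := by
    intro i j
    have hi : ‖v i‖ ^ 2 ≤ S :=
      Finset.single_le_sum (f := fun k => ‖v k‖ ^ 2) (fun _ _ => by positivity)
        (Finset.mem_univ i)
    have hj : ‖v j‖ ^ 2 ≤ S :=
      Finset.single_le_sum (f := fun k => ‖v k‖ ^ 2) (fun _ _ => by positivity)
        (Finset.mem_univ j)
    nlinarith [norm_nonneg (v i), norm_nonneg (v j)]
  calc |(star v ⬝ᵥ N *ᵥ v).re| ≤ ‖star v ⬝ᵥ N *ᵥ v‖ := Complex.abs_re_le_norm _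
    _ = ‖∑ i, ∑ j, star (v i) * (N i j * v j)‖ := by rw [quad_entries]
    _ ≤ ∑ i, ∑ j, ‖star (v i) * (N i j * v j)‖ :=
        (norm_sum_le _ _).trans (Finset.sum_le_sum fun i _ => norm_sum_le _ _)
    _ ≤ ∑ i, ∑ j, ‖N i j‖ * S := by
        refine Finset.sum_le_sum fun i _ => Finset.sum_le_sum fun j _ => ?_
        rw [norm_mul, norm_mul, norm_star]
        calc ‖v i‖ * (‖N i j‖ * ‖v j‖) = ‖N i j‖ * (‖v i‖ * ‖v j‖) := by ring
          _ ≤ ‖N i j‖ * S := by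
              exact mul_le_mul_of_nonneg_left (hvS i j) (norm_nonneg _)
    _ = (∑ i, ∑ j, ‖N i j‖) * S := by
        rw [Finset.sum_mul]
        exact Finset.sum_congr rfl fun i _ => by rw [Finset.sum_mul]

lemma abs_rayleigh_le {n : ℕ} (N : Matrix (Fin n) (Fin n) ℂ) {v : Fin n → ℂ} (hv : v ≠ 0) :
    |rayleigh N v| ≤ ∑ i, ∑ j, ‖N i j‖ := by
  have hS := sum_sq_pos hv
  rw [rayleigh, abs_div, abs_of_pos hS, div_le_iff₀ hS]
  exact quad_abs_bound N v

lemma lamMin_le_rayleigh {n : ℕ} (N : Matrix (Fin n) (Fin n) ℂ) {v : Fin n → ℂ} (hv : v ≠ 0) :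
    lamMin N ≤ rayleigh N v := by
  refine ciInf_le (f := fun u : {v : Fin n → ℂ // v ≠ 0} => rayleigh N u.1)
    ⟨-(∑ i, ∑ j, ‖N i j‖), ?_⟩ (⟨v, hv⟩ : {v : Fin n → ℂ // v ≠ 0})
  rintro x ⟨u, rfl⟩
  exact neg_le_of_abs_le (abs_rayleigh_le N u.2)

lemma rayleigh_le_lamMax {n : ℕ} (N : Matrix (Fin n) (Fin n) ℂ) {v : Fin n → ℂ} (hv : v ≠ 0) :
    rayleigh N v ≤ lamMax N := by
  refine le_ciSup (f := fun u : {v : Fin n → ℂ // v ≠ 0} => rayleigh N u.1)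
    ⟨∑ i, ∑ j, ‖N i j‖, ?_⟩ (⟨v, hv⟩ : {v : Fin n → ℂ // v ≠ 0})
  rintro x ⟨u, rfl⟩
  exact le_of_abs_le (abs_rayleigh_le N u.2)

lemma vecNorm_nonneg {n : ℕ} (v : Fin n → ℂ) : 0 ≤ vecNorm v := Real.sqrt_nonneg _

lemma vecNorm_sq {n : ℕ} (v : Fin n → ℂ) : vecNorm v ^ 2 = ∑ i, ‖v i‖ ^ 2 :=
  Real.sq_sqrt (Finset.sum_nonneg fun _ _ => by positivity)

lemma vecNorm_smul {n : ℕ} (c : ℂ) (v : Fin n → ℂ) :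
    vecNorm (c • v) = ‖c‖ * vecNorm v := by
  unfold vecNorm
  rw [← Real.sqrt_sq (norm_nonneg c), ← Real.sqrt_mul (by positivity)]
  congr 1
  rw [Finset.mul_sum]
  exact Finset.sum_congr rfl fun i _ => by simp [norm_smul, mul_pow]

lemma sigmaMin_nonneg {n : ℕ} (N : Matrix (Fin n) (Fin n) ℂ) : 0 ≤ sigmaMin N :=
  Real.iInf_nonneg fun _ => vecNorm_nonneg _

lemma sigmaMin_sq_le_rayleigh {n : ℕ} (N : Matrix (Fin n) (Fin n) ℂ) {v : Fin n → ℂ}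
    (hv : v ≠ 0) : sigmaMin N ^ 2 ≤ rayleigh (Nᴴ * N) v := by
  have hS : 0 < ∑ i, ‖v i‖ ^ 2 := sum_sq_pos hv
  have hVn : 0 < vecNorm v := Real.sqrt_pos.2 hS
  set c : ℂ := (((vecNorm v)⁻¹ : ℝ) : ℂ) with hc
  have hc0 : c ≠ 0 := by
    simp [hc, Complex.ofReal_ne_zero]
    positivity
  set u : Fin n → ℂ := c • v with hu
  have hu1 : vecNorm u = 1 := by
    rw [hu, vecNorm_smul, hc, Complex.norm_real, Real.norm_eq_abs,
      abs_of_pos (by positivity), inv_mul_cancel₀ hVn.ne']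
  have h1 : sigmaMin N ≤ vecNorm (N *ᵥ u) := by
    refine ciInf_le (f := fun w : {w : Fin n → ℂ // vecNorm w = 1} => vecNorm (N *ᵥ w.1))
      ⟨0, ?_⟩ (⟨u, hu1⟩ : {w : Fin n → ℂ // vecNorm w = 1})
    rintro x ⟨w, rfl⟩
    exact vecNorm_nonneg _
  have h2 : sigmaMin N ^ 2 ≤ vecNorm (N *ᵥ u) ^ 2 :=
    pow_le_pow_left₀ (sigmaMin_nonneg N) h1 2
  have h3 : vecNorm (N *ᵥ u) ^ 2 = rayleigh (Nᴴ * N) u := by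
    have hus : ∑ i, ‖u i‖ ^ 2 = 1 := by
      rw [← vecNorm_sq, hu1]; norm_num
    rw [vecNorm_sq, rayleigh, quad_gram, dot_self_re, hus, div_one]
  have h4 : rayleigh (Nᴴ * N) u = rayleigh (Nᴴ * N) v := rayleigh_smul _ _ _ hc0
  linarith

lemma quad_sum {n : ℕ} {ι : Type*} (s : Finset ι) (f : ι → Matrix (Fin n) (Fin n) ℂ)
    (v : Fin n → ℂ) :
    star v ⬝ᵥ (∑ j ∈ s, f j) *ᵥ v = ∑ j ∈ s, star v ⬝ᵥ (f j) *ᵥ v := by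
  classical
  induction s using Finset.induction_on with
  | empty => simp
  | insert _ _ h ih =>
    rw [Finset.sum_insert h, Finset.sum_insert h, add_mulVec, dotProduct_add, ih]

lemma gram_expand {n Q : ℕ} (M : Fin Q → Matrix (Fin n) (Fin n) ℂ) (θ' : Fin Q → ℝ) :
    (∑ j, (θ' j : ℂ) • M j)ᴴ * (∑ j, (θ' j : ℂ) • M j)
      = ∑ j, ∑ m, ((θ' j * θ' m : ℝ) : ℂ) • ((M j)ᴴ * M m) := by
  rw [conjTranspose_sum, Finset.sum_mul]
  refine Finset.sum_congr rfl fun j _ => ?_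
  rw [Finset.mul_sum]
  refine Finset.sum_congr rfl fun m _ => ?_
  rw [conjTranspose_smul, smul_mul_assoc, mul_smul_comm, smul_smul, Complex.star_def,
    Complex.conj_ofReal, Complex.ofReal_mul]

lemma rayleigh_expand {n Q : ℕ} (M : Fin Q → Matrix (Fin n) (Fin n) ℂ) (θ' : Fin Q → ℝ)
    (v : Fin n → ℂ) :
    rayleigh ((∑ j, (θ' j : ℂ) • M j)ᴴ * ∑ j, (θ' j : ℂ) • M j) v
      = ∑ j, ∑ m, θ' j * θ' m * rayleigh ((M j)ᴴ * M m) v := by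
  unfold rayleigh
  rw [gram_expand, quad_sum, Complex.re_sum, Finset.sum_div]
  refine Finset.sum_congr rfl fun j _ => ?_
  rw [quad_sum, Complex.re_sum, Finset.sum_div]
  refine Finset.sum_congr rfl fun m _ => ?_
  rw [smul_mulVec, dotProduct_smul, smul_eq_mul, Complex.re_ofReal_mul, mul_div_assoc]

lemma scmY_symm {n Q : ℕ} (M : Fin Q → Matrix (Fin n) (Fin n) ℂ) (v : Fin n → ℂ)
    (j m : Fin Q) : scmY M v m j = scmY M v j m := by
  unfold scmY
  rw [rayleigh_hermPart, rayleigh_hermPart]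
  unfold rayleigh
  congr 1
  have : (M m)ᴴ * M j = ((M j)ᴴ * M m)ᴴ := by
    rw [conjTranspose_mul, conjTranspose_conjTranspose]
  rw [this, quad_conjT, Complex.star_def, Complex.conj_re]


lemma filter_lt_univ {Q : ℕ} (j : Fin Q) :
    Finset.univ.filter (· < j) = Finset.Iio j := by
  ext m; simp

lemma filter_ge_univ {Q : ℕ} (j : Fin Q) :
    Finset.univ.filter (fun m => ¬ m < j) = Finset.Ici j := by
  ext m; simp [not_lt]

lemma filter_gt_univ {Q : ℕ} (j : Fin Q) :
    Finset.univ.filter (fun m => j < m) = Finset.Ioi j := by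
  ext m; simp

lemma sum_Iio_swap {Q : ℕ} (f : Fin Q → Fin Q → ℝ) :
    ∑ j, ∑ m ∈ Finset.Iio j, f j m = ∑ j, ∑ m ∈ Finset.Ioi j, f m j := by
  have h1 : ∑ j, ∑ m ∈ Finset.Iio j, f j m
      = ∑ j, ∑ m, if m < j then f j m else 0 := by
    refine Finset.sum_congr rfl fun j _ => ?_
    rw [← filter_lt_univ j, Finset.sum_filter]
  have h2 : ∑ j : Fin Q, ∑ m ∈ Finset.Ioi j, f m j
      = ∑ j : Fin Q, ∑ m, if j < m then f m j else 0 := by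
    refine Finset.sum_congr rfl fun j _ => ?_
    rw [← filter_gt_univ j, Finset.sum_filter]
  rw [h1, h2, Finset.sum_comm]

lemma sum_triangle {Q : ℕ} (f : Fin Q → Fin Q → ℝ) (hf : ∀ j m, f m j = f j m) :
    ∑ j : Fin Q, ∑ m ∈ Finset.Ici j, (if j = m then 1 else 2 : ℝ) * f j m
      = ∑ j, ∑ m, f j m := by
  have hIci : ∀ j : Fin Q, ∑ m ∈ Finset.Ici j, (if j = m then 1 else 2 : ℝ) * f j m
      = (∑ m ∈ Finset.Ici j, f j m) + ∑ m ∈ Finset.Ioi j, f j m := by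
    intro j
    rw [← Finset.Ioi_insert j, Finset.sum_insert Finset.notMem_Ioi_self,
      Finset.sum_insert Finset.notMem_Ioi_self, if_pos rfl, one_mul, add_assoc,
      ← Finset.sum_add_distrib]
    congr 1
    refine Finset.sum_congr rfl fun m hm => ?_
    rw [if_neg (fun h => Finset.notMem_Ioi_self (h ▸ hm))]; ring
  have hsplit : ∀ j : Fin Q, (∑ m, f j m)
      = (∑ m ∈ Finset.Iio j, f j m) + ∑ m ∈ Finset.Ici j, f j m := by
    intro j
    rw [← filter_lt_univ j, ← filter_ge_univ j]
    exact (Finset.sum_filter_add_sum_filter_not _ _ _).symm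
  have hswap : ∑ j, ∑ m ∈ Finset.Iio j, f j m = ∑ j, ∑ m ∈ Finset.Ioi j, f j m := by
    rw [sum_Iio_swap]
    exact Finset.sum_congr rfl fun j _ => Finset.sum_congr rfl fun m _ => hf j m
  calc ∑ j : Fin Q, ∑ m ∈ Finset.Ici j, (if j = m then 1 else 2 : ℝ) * f j m
      = ∑ j, ((∑ m ∈ Finset.Ici j, f j m) + ∑ m ∈ Finset.Ioi j, f j m) :=
        Finset.sum_congr rfl fun j _ => hIci j
    _ = (∑ j, ∑ m ∈ Finset.Ici j, f j m) + ∑ j, ∑ m ∈ Finset.Ioi j, f j m :=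
        Finset.sum_add_distrib
    _ = (∑ j, ∑ m ∈ Finset.Ici j, f j m) + ∑ j, ∑ m ∈ Finset.Iio j, f j m := by
        rw [hswap]
    _ = ∑ j, ∑ m, f j m := by
        rw [← Finset.sum_add_distrib]
        exact Finset.sum_congr rfl fun j _ => by rw [hsplit j, add_comm]

lemma scmJ_eq_rayleigh {n Q : ℕ} (M : Fin Q → Matrix (Fin n) (Fin n) ℂ) (θ' : Fin Q → ℝ)
    (v : Fin n → ℂ) :
    scmJ θ' (scmY M v)
      = rayleigh ((∑ j, (θ' j : ℂ) • M j)ᴴ * ∑ j, (θ' j : ℂ) • M j) v := by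
  rw [rayleigh_expand]
  unfold scmJ
  have h := sum_triangle (fun j m => θ' j * θ' m * scmY M v j m)
    (fun j m => by rw [scmY_symm]; ring)
  calc ∑ j : Fin Q, ∑ m ∈ Finset.Ici j, (if j = m then 1 else 2 : ℝ) * θ' j * θ' m
          * scmY M v j m
      = ∑ j : Fin Q, ∑ m ∈ Finset.Ici j, (if j = m then 1 else 2 : ℝ)
          * (θ' j * θ' m * scmY M v j m) := by
        refine Finset.sum_congr rfl fun j _ => Finset.sum_congr rfl fun m _ => by ring
    _ = ∑ j, ∑ m, θ' j * θ' m * scmY M v j m := h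
    _ = ∑ j, ∑ m, θ' j * θ' m * rayleigh ((M j)ᴴ * M m) v := by
        refine Finset.sum_congr rfl fun j _ => Finset.sum_congr rfl fun m _ => ?_
        rw [show scmY M v j m = rayleigh (hermPart ((M j)ᴴ * M m)) v from rfl,
          rayleigh_hermPart]

/-- Feasibility of the exact Rayleigh-quotient vector for the SCM linear program:
(i) box constraints by extremal eigenvalues, (ii) the lower-bound constraints for every
coefficient vector; consequently the SCM linear-program value is at most `σ_min(M(P))²`
whenever the latter is attained by some nonzero vector. -/
theorem stmt7 {n Q : ℕ} (M : Fin Q → Matrix (Fin n) (Fin n) ℂ) (θ : Fin Q → ℝ)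
    (v : Fin n → ℂ) (hv : v ≠ 0) :
    (∀ j m : Fin Q, j ≤ m →
        lamMin (hermPart ((M j)ᴴ * M m)) ≤ scmY M v j m ∧
          scmY M v j m ≤ lamMax (hermPart ((M j)ᴴ * M m))) ∧
      (∀ θ' : Fin Q → ℝ,
        sigmaMin (∑ j, (θ' j : ℂ) • M j) ^ 2 ≤ scmJ θ' (scmY M v)) ∧
      ∀ vstar : Fin n → ℂ, vstar ≠ 0 →
        sigmaMin (∑ j, (θ j : ℂ) • M j) ^ 2
            = rayleigh ((∑ j, (θ j : ℂ) • M j)ᴴ * ∑ j, (θ j : ℂ) • M j) vstar →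
        ∀ (k : ℕ) (θs : Fin k → Fin Q → ℝ),
          sInf {t : ℝ | ∃ y : Fin Q → Fin Q → ℝ,
              (∀ j m : Fin Q, j ≤ m →
                lamMin (hermPart ((M j)ᴴ * M m)) ≤ y j m ∧
                  y j m ≤ lamMax (hermPart ((M j)ᴴ * M m))) ∧
              (∀ ℓ : Fin k, sigmaMin (∑ j, (θs ℓ j : ℂ) • M j) ^ 2 ≤ scmJ (θs ℓ) y) ∧
              t = scmJ θ y}
            ≤ sigmaMin (∑ j, (θ j : ℂ) • M j) ^ 2 := by
  refine ⟨fun j m _ => ⟨lamMin_le_rayleigh _ hv, rayleigh_le_lamMax _ hv⟩,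
    fun θ' => ?_, ?_⟩
  · rw [scmJ_eq_rayleigh]
    exact sigmaMin_sq_le_rayleigh _ hv
  · intro vstar hvs heq k θs
    by_cases hbdd : BddBelow {t : ℝ | ∃ y : Fin Q → Fin Q → ℝ,
        (∀ j m : Fin Q, j ≤ m →
          lamMin (hermPart ((M j)ᴴ * M m)) ≤ y j m ∧
            y j m ≤ lamMax (hermPart ((M j)ᴴ * M m))) ∧
        (∀ ℓ : Fin k, sigmaMin (∑ j, (θs ℓ j : ℂ) • M j) ^ 2 ≤ scmJ (θs ℓ) y) ∧
        t = scmJ θ y}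
    · refine csInf_le hbdd ?_
      refine ⟨scmY M vstar,
        fun j m _ => ⟨lamMin_le_rayleigh _ hvs, rayleigh_le_lamMax _ hvs⟩,
        fun ℓ => ?_, ?_⟩
      · rw [scmJ_eq_rayleigh]
        exact sigmaMin_sq_le_rayleigh _ hvs
      · rw [scmJ_eq_rayleigh, ← heq]
    · rw [Real.sInf_of_not_bddBelow hbdd]
      exact sq_nonneg _
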